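/- If c : X × Y → [0,+∞] is a sync with respect to one choice of duality pairing data, then for any duality pairing ⟨·,·⟩ on X × Y, the function b(x,y) := c(x,y) + ⟨x,y⟩ is a bipotential with respect to ⟨·,·⟩. -/

import Mathlib

open scoped Classical
noncomputable section

def ERealConvexOn {X : Type*} [AddCommGroup X] [Module ℝ X] (f : X → EReal) : Prop :=
  ∀ x z : X, ∀ t : ℝ, 0 ≤ t → t ≤ 1 →
    f (t • x + (1 - t) • z) ≤ (t : EReal) * f x + ((1 - t) : EReal) * f z

def SubdiffFst {X Y : Type*} [AddCommGroup X] [Module ℝ X] [AddCommGroup Y] [Module ℝ Y]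
    (pair : X →ₗ[ℝ] Y →ₗ[ℝ] ℝ) (f : X → EReal) (x : X) : Set Y :=
  {y | ∀ z, ((pair (z - x) y : ℝ) : EReal) ≤ f z - f x}

def SubdiffSnd {X Y : Type*} [AddCommGroup X] [Module ℝ X] [AddCommGroup Y] [Module ℝ Y]
    (pair : X →ₗ[ℝ] Y →ₗ[ℝ] ℝ) (g : Y → EReal) (y : Y) : Set X :=
  {x | ∀ w, ((pair x (w - y) : ℝ) : EReal) ≤ g w - g y}

structure IsBipotential {X Y : Type*} [AddCommGroup X] [Module ℝ X] [TopologicalSpace X]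
    [AddCommGroup Y] [Module ℝ Y] [TopologicalSpace Y]
    (pair : X →ₗ[ℝ] Y →ₗ[ℝ] ℝ) (b : X → Y → EReal) : Prop where
  ne_bot : ∀ x y, b x y ≠ ⊥
  convex_lsc_fst : ∀ y, (∃ x, b x y ≠ ⊤) →
    ERealConvexOn (fun x => b x y) ∧ LowerSemicontinuous (fun x => b x y)
  convex_lsc_snd : ∀ x, (∃ y, b x y ≠ ⊤) →
    ERealConvexOn (b x) ∧ LowerSemicontinuous (b x)
  ge_pair : ∀ x y, ((pair x y : ℝ) : EReal) ≤ b x y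
  subdiff_iff₁ : ∀ x y,
    y ∈ SubdiffFst pair (fun x' => b x' y) x ↔ x ∈ SubdiffSnd pair (b x) y
  subdiff_iff₂ : ∀ x y,
    x ∈ SubdiffSnd pair (b x) y ↔ b x y = ((pair x y : ℝ) : EReal)

structure IsSync {X Y : Type*} [AddCommGroup X] [Module ℝ X] [TopologicalSpace X]
    [AddCommGroup Y] [Module ℝ Y] [TopologicalSpace Y] (c : X → Y → EReal) : Prop where
  nonneg : ∀ x y, 0 ≤ c x y
  convex_lsc_fst : ∀ y, (∃ x, c x y ≠ ⊤) →
    ERealConvexOn (fun x => c x y) ∧ LowerSemicontinuous (fun x => c x y)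
  convex_lsc_snd : ∀ x, (∃ y, c x y ≠ ⊤) →
    ERealConvexOn (c x) ∧ LowerSemicontinuous (c x)
  min_snd : ∀ x, (∃ y, c x y ≠ ⊤) → ∀ y₀, (∀ y, c x y₀ ≤ c x y) → c x y₀ = 0
  min_fst : ∀ y, (∃ x, c x y ≠ ⊤) → ∀ x₀, (∀ x, c x₀ y ≤ c x y) → c x₀ y = 0

private lemma add_coe_sub_coe (a : EReal) (r s : ℝ) :
    a + (r : EReal) - (s : EReal) = a + ((r - s : ℝ) : EReal) := by
  rw [sub_eq_add_neg, add_assoc, ← EReal.coe_neg, ← EReal.coe_add, ← sub_eq_add_neg]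

private lemma ereal_mul_add_coe (t : ℝ) (ht : 0 ≤ t) (a : EReal) (ha : a ≠ ⊥) (r : ℝ) :
    (t : EReal) * (a + (r : EReal)) = (t : EReal) * a + ((t * r : ℝ) : EReal) := by
  induction a with
  | bot => exact absurd rfl ha
  | coe s => norm_cast; ring
  | top =>
    rcases eq_or_lt_of_le ht with h0 | h0
    · simp [← h0]
    · rw [EReal.top_add_coe, EReal.mul_top_of_pos (by exact_mod_cast h0), EReal.top_add_coe]

private lemma sync_sub_cond {Y : Type*} (c : Y → EReal) (hne : ∀ w, c w ≠ ⊥) (P : Y → ℝ)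
    (y : Y) :
    (∀ w, ((P w - P y : ℝ) : EReal) ≤ (c w + (P w : EReal)) - (c y + (P y : EReal))) ↔
      (c y ≠ ⊤ ∧ ∀ w, c y ≤ c w) := by
  constructor
  · intro h
    have hy : c y ≠ ⊤ := by
      intro hT
      have h0 := h y
      rw [hT, EReal.top_add_coe, EReal.sub_top] at h0
      simp at h0
    refine ⟨hy, fun w => ?_⟩
    obtain ⟨q, hq⟩ := EReal.canLift.prf (c y) ⟨hy, hne y⟩
    have hw := h w
    rw [← hq, ← EReal.coe_add, add_coe_sub_coe] at hw
    have hrw : (P w - P y : ℝ) = q + (P w - (q + P y)) := by ring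
    rw [hrw, EReal.coe_add] at hw
    have := (EReal.addLECancellable_coe (P w - (q + P y))).add_le_add_iff_right.mp hw
    rwa [← hq]
  · rintro ⟨hy, hmin⟩ w
    obtain ⟨q, hq⟩ := EReal.canLift.prf (c y) ⟨hy, hne y⟩
    rw [← hq, ← EReal.coe_add, add_coe_sub_coe]
    have hrw : (P w - P y : ℝ) = q + (P w - (q + P y)) := by ring
    rw [hrw, EReal.coe_add]
    exact add_le_add_left (hq ▸ hmin w) _

private lemma conv_add_lin {X : Type*} [AddCommGroup X] [Module ℝ X]
    (d : X → EReal) (hd : ERealConvexOn d) (hne : ∀ x, d x ≠ ⊥) (P : X → ℝ)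
    (hP : ∀ x z (t : ℝ), P (t • x + (1 - t) • z) = t * P x + (1 - t) * P z) :
    ERealConvexOn (fun x => d x + ((P x : ℝ) : EReal)) := by
  intro x z t ht ht1
  have h1t : (0 : ℝ) ≤ 1 - t := by linarith
  have hco : (1 : EReal) - (t : EReal) = ((1 - t : ℝ) : EReal) := by norm_cast
  simp only
  rw [hP x z t, hco, ereal_mul_add_coe t ht (d x) (hne x),
    ereal_mul_add_coe (1 - t) h1t (d z) (hne z)]
  calc d (t • x + (1 - t) • z) + ((t * P x + (1 - t) * P z : ℝ) : EReal)
      ≤ ((t : EReal) * d x + ((1 - t : ℝ) : EReal) * d z) +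
          ((t * P x + (1 - t) * P z : ℝ) : EReal) :=
        add_le_add_left (by rw [← hco]; exact hd x z t ht ht1) _
    _ = (t : EReal) * d x + ((t * P x : ℝ) : EReal) +
          (((1 - t : ℝ) : EReal) * d z + (((1 - t) * P z : ℝ) : EReal)) := by
        rw [EReal.coe_add]; abel

private lemma lsc_add_cont {X : Type*} [TopologicalSpace X]
    (d : X → EReal) (hd : LowerSemicontinuous d) (hne : ∀ x, d x ≠ ⊥) (P : X → ℝ)
    (hP : Continuous P) :
    LowerSemicontinuous (fun x => d x + ((P x : ℝ) : EReal)) := by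
  refine hd.add' ((continuous_coe_real_ereal.comp hP).lowerSemicontinuous) fun x => ?_
  exact EReal.continuousAt_add (Or.inr (EReal.coe_ne_bot _)) (Or.inl (hne x))

theorem sync_add_pairing_isBipotential {X Y : Type*}
    [AddCommGroup X] [Module ℝ X] [TopologicalSpace X]
    [AddCommGroup Y] [Module ℝ Y] [TopologicalSpace Y]
    (pair : X →ₗ[ℝ] Y →ₗ[ℝ] ℝ)
    (hp₁ : ∀ x, Continuous fun y => pair x y) (hp₂ : ∀ y, Continuous fun x => pair x y)
    (c : X → Y → EReal) (hc : IsSync c) :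
    IsBipotential pair (fun x y => c x y + ((pair x y : ℝ) : EReal)) := by
  have hne : ∀ x y, c x y ≠ ⊥ := by
    intro x y h
    have h2 := hc.nonneg x y
    rw [h] at h2
    exact absurd h2 (by simp)
  have htop : ∀ x y, c x y + ((pair x y : ℝ) : EReal) = ⊤ ↔ c x y = ⊤ := by
    intro x y
    constructor
    · intro h
      by_contra hT
      obtain ⟨q, hq⟩ := EReal.canLift.prf (c x y) ⟨hT, hne x y⟩
      rw [← hq, ← EReal.coe_add] at h
      exact EReal.coe_ne_top _ h
    · intro h; rw [h, EReal.top_add_coe]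
  have hSnd : ∀ x y,
      (x ∈ SubdiffSnd pair (fun w => c x w + ((pair x w : ℝ) : EReal)) y) ↔
        (c x y ≠ ⊤ ∧ ∀ w, c x y ≤ c x w) := by
    intro x y
    have hms : ∀ w : Y, pair x (w - y) = pair x w - pair x y := fun w => map_sub (pair x) w y
    simp only [SubdiffSnd, Set.mem_setOf_eq, hms]
    exact sync_sub_cond (c x) (hne x) (fun w => pair x w) y
  have hFst : ∀ x y,
      (y ∈ SubdiffFst pair (fun z => c z y + ((pair z y : ℝ) : EReal)) x) ↔
        (c x y ≠ ⊤ ∧ ∀ z, c x y ≤ c z y) := by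
    intro x y
    have hms : ∀ z : X, pair (z - x) y = pair z y - pair x y := by
      intro z; rw [map_sub, LinearMap.sub_apply]
    simp only [SubdiffFst, Set.mem_setOf_eq, hms]
    exact sync_sub_cond (fun z => c z y) (fun z => hne z y) (fun z => pair z y) x
  refine ⟨?_, ?_, ?_, ?_, ?_, ?_⟩
  · intro x y
    rw [Ne, EReal.add_eq_bot_iff]
    push_neg
    exact ⟨hne x y, EReal.coe_ne_bot _⟩
  · intro y ⟨x0, hx0⟩
    have hex : ∃ x, c x y ≠ ⊤ := ⟨x0, fun h => hx0 ((htop _ _).2 h)⟩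
    obtain ⟨hconv, hlsc⟩ := hc.convex_lsc_fst y hex
    constructor
    · exact conv_add_lin (fun x => c x y) hconv (fun x => hne x y) (fun x => pair x y)
        (fun x z t => by simp [map_add, map_smul, smul_eq_mul])
    · exact lsc_add_cont (fun x => c x y) hlsc (fun x => hne x y) _ (hp₂ y)
  · intro x ⟨y0, hy0⟩
    have hex : ∃ y, c x y ≠ ⊤ := ⟨y0, fun h => hy0 ((htop _ _).2 h)⟩
    obtain ⟨hconv, hlsc⟩ := hc.convex_lsc_snd x hex
    constructor
    · exact conv_add_lin (c x) hconv (hne x) (fun y => pair x y)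
        (fun y w t => by simp [map_add, map_smul, smul_eq_mul])
    · exact lsc_add_cont (c x) hlsc (hne x) _ (hp₁ x)
  · intro x y
    calc ((pair x y : ℝ) : EReal) = 0 + ((pair x y : ℝ) : EReal) := (zero_add _).symm
      _ ≤ c x y + ((pair x y : ℝ) : EReal) := add_le_add_left (hc.nonneg x y) _
  · intro x y
    rw [hFst x y, hSnd x y]
    constructor
    · rintro ⟨hT, hmin⟩
      have h0 : c x y = 0 := hc.min_fst y ⟨x, hT⟩ x hmin
      exact ⟨h0 ▸ (by simp : (0 : EReal) ≠ ⊤), fun w => h0 ▸ hc.nonneg x w⟩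
    · rintro ⟨hT, hmin⟩
      have h0 : c x y = 0 := hc.min_snd x ⟨y, hT⟩ y hmin
      exact ⟨h0 ▸ (by simp : (0 : EReal) ≠ ⊤), fun z => h0 ▸ hc.nonneg z y⟩
  · intro x y
    rw [hSnd x y]
    constructor
    · rintro ⟨hT, hmin⟩
      have h0 : c x y = 0 := hc.min_snd x ⟨y, hT⟩ y hmin
      simp only [h0, zero_add]
    · intro h
      have h0 : c x y = 0 := by
        have h2 := EReal.add_sub_cancel_right (a := c x y) (b := (pair x y : ℝ))
        rw [h] at h2
        rw [← h2, ← EReal.coe_sub, sub_self, EReal.coe_zero]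
      exact ⟨h0 ▸ (by simp : (0 : EReal) ≠ ⊤), fun w => h0 ▸ hc.nonneg x w⟩
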